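/- arXiv:2304.04930 — 3 statements merged into one kernel-verified Lean document; each statement's English description precedes it below -/
import Mathlib

section
/- Let x, y ∈ R^n with x ≠ y, and let π_x(z) = (z−x)/‖z−x‖ be the radial projection onto the unit sphere centered at x. Let H ⊂ R^n be a hyperplane through y with unit normal ν. Then the Jacobian determinant of the restriction of the derivative D_y π_x to H equals |⟨x−y, ν⟩| / ‖x−y‖^n. -/
open Metric Set ContinuousLinearMap
open scoped RealInnerProductSpace

lemma det_id_sub_smulRight {E : Type*} [AddCommGroup E] [Module ℝ E] [FiniteDimensional ℝ E]
    (f : E →ₗ[ℝ] ℝ) (v : E) :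
    LinearMap.det (LinearMap.id - f.smulRight v) = 1 - f v := by
  classical
  set b := Module.finBasis ℝ E
  rw [← LinearMap.det_toMatrix b]
  have h : LinearMap.toMatrix b b (LinearMap.id - f.smulRight v)
      = 1 - Matrix.replicateCol Unit (fun i => b.repr v i) * Matrix.replicateRow Unit (fun j => f (b j)) := by
    ext i j
    simp [LinearMap.toMatrix_apply, Matrix.mul_apply, Matrix.one_apply, mul_comm,
      Finsupp.single_apply, eq_comm]
  rw [h, Matrix.det_one_sub_mul_comm, Matrix.det_unique, Matrix.sub_apply,
    Matrix.one_apply_eq, Matrix.mul_apply]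
  congr 1
  simp only [Matrix.replicateRow_apply, Matrix.replicateCol_apply]
  conv_rhs => rw [← b.sum_repr v, map_sum]
  simp [mul_comm]

set_option maxHeartbeats 1000000 in
/-- Let `x ≠ y` in `ℝⁿ` and `π_x(z) = (z - x)/‖z - x‖` the radial projection
onto the unit sphere centered at `x`.  Let `H` be the hyperplane through `y` with unit
normal `ν` (whose direction space is the orthogonal complement of `span ν`).  Then the
Jacobian determinant `√(det (L* ∘ L))` of the restriction `L` of the derivative
`D_y π_x` to `H` equals `|⟪x - y, ν⟫| / ‖x - y‖ ^ n`. -/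
theorem stmt_1 (n : ℕ) (x y : EuclideanSpace ℝ (Fin n)) (hxy : x ≠ y)
    (ν : EuclideanSpace ℝ (Fin n)) (hν : ‖ν‖ = 1) :
    let H : Submodule ℝ (EuclideanSpace ℝ (Fin n)) := (ℝ ∙ ν)ᗮ
    let L : H →L[ℝ] EuclideanSpace ℝ (Fin n) :=
      (fderiv ℝ (fun z : EuclideanSpace ℝ (Fin n) => ‖z - x‖⁻¹ • (z - x)) y).comp H.subtypeL
    Real.sqrt (LinearMap.det (((ContinuousLinearMap.adjoint L).comp L).toLinearMap)) =
      |⟪x - y, ν⟫| / ‖x - y‖ ^ n := by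
  intro H L
  obtain _ | m := n
  · exact absurd (Subsingleton.elim x y) hxy
  set r : ℝ := ‖y - x‖ with hrdef
  have hr : 0 < r := norm_pos_iff.mpr (sub_ne_zero.mpr (Ne.symm hxy))
  set u : EuclideanSpace ℝ (Fin (m + 1)) := r⁻¹ • (y - x) with hudef
  have hu : ‖u‖ = 1 := by
    rw [hudef, norm_smul, norm_inv, Real.norm_eq_abs, abs_of_pos hr, ← hrdef,
      inv_mul_cancel₀ hr.ne']
  have hu2 : ⟪u, u⟫ = 1 := by rw [real_inner_self_eq_norm_mul_norm, hu, one_mul]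
  set D' : EuclideanSpace ℝ (Fin (m + 1)) →L[ℝ] EuclideanSpace ℝ (Fin (m + 1)) :=
    r⁻¹ • ContinuousLinearMap.id ℝ (EuclideanSpace ℝ (Fin (m + 1)))
      - (r⁻¹ • innerSL ℝ u).smulRight u with hD'def
  have hD : fderiv ℝ (fun z : EuclideanSpace ℝ (Fin (m + 1)) => ‖z - x‖⁻¹ • (z - x)) y = D' := by
    have hsub : HasFDerivAt (fun z : EuclideanSpace ℝ (Fin (m + 1)) => z - x)
        (ContinuousLinearMap.id ℝ (EuclideanSpace ℝ (Fin (m + 1)))) y :=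
      (hasFDerivAt_id y).sub_const x
    have hns : HasFDerivAt (fun z : EuclideanSpace ℝ (Fin (m + 1)) => ‖z - x‖ ^ 2)
        (2 • (innerSL ℝ (y - x)).comp (ContinuousLinearMap.id ℝ (EuclideanSpace ℝ (Fin (m + 1)))))
        y := hsub.norm_sq
    have hr2 : (0 : ℝ) < ‖y - x‖ ^ 2 := by positivity
    have hinv' : HasDerivAt (fun t : ℝ => (Real.sqrt t)⁻¹)
        (-(1 / (2 * Real.sqrt (‖y - x‖ ^ 2))) / Real.sqrt (‖y - x‖ ^ 2) ^ 2) (‖y - x‖ ^ 2) :=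
      (Real.hasDerivAt_sqrt hr2.ne').inv
        (by rw [Real.sqrt_sq (norm_nonneg _)]; exact hr.ne')
    have hcomp := hinv'.comp_hasFDerivAt y hns
    have hfun : ((fun t : ℝ => (Real.sqrt t)⁻¹) ∘ fun z : EuclideanSpace ℝ (Fin (m + 1)) => ‖z - x‖ ^ 2)
        = fun z : EuclideanSpace ℝ (Fin (m + 1)) => ‖z - x‖⁻¹ := by
      funext z; simp only [Function.comp_apply]; rw [Real.sqrt_sq (norm_nonneg _)]
    rw [hfun] at hcomp
    have hprod : HasFDerivAt (fun z : EuclideanSpace ℝ (Fin (m + 1)) => ‖z - x‖⁻¹ • (z - x)) _ y :=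
      hcomp.smul hsub
    rw [hprod.fderiv]
    refine ContinuousLinearMap.ext fun v => ?_
    simp only [ContinuousLinearMap.add_apply, ContinuousLinearMap.smul_apply,
      ContinuousLinearMap.id_apply, ContinuousLinearMap.smulRight_apply,
      ContinuousLinearMap.comp_apply, ContinuousLinearMap.sub_apply, innerSL_apply_apply,
      ContinuousLinearMap.coe_smul', Pi.smul_apply, smul_eq_mul, nsmul_eq_mul,
      Nat.cast_ofNat, hD'def]
    rw [Real.sqrt_sq (norm_nonneg _)]
    rw [hudef, real_inner_smul_left]
    rw [← hrdef]
    match_scalars <;> field_simp [hr.ne'] <;> ring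
  have hinner : ∀ v w : EuclideanSpace ℝ (Fin (m + 1)),
      ⟪D' v, D' w⟫ = r⁻¹ * r⁻¹ * (⟪v, w⟫ - ⟪u, v⟫ * ⟪u, w⟫) := by
    intro v w
    simp only [hD'def, ContinuousLinearMap.sub_apply, ContinuousLinearMap.smul_apply,
      ContinuousLinearMap.id_apply, ContinuousLinearMap.smulRight_apply, innerSL_apply_apply,
      smul_smul, smul_eq_mul]
    simp only [inner_sub_left, inner_sub_right, real_inner_smul_left, real_inner_smul_right, hu2,
      smul_eq_mul]
    simp only [real_inner_comm w u, real_inner_comm v u]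
    ring
  set c : ℝ := ⟪u, ν⟫ with hcdef
  have hνν : ⟪ν, ν⟫ = (1 : ℝ) := by rw [real_inner_self_eq_norm_mul_norm, hν, one_mul]
  have hwmem : u - c • ν ∈ H := by
    rw [Submodule.mem_orthogonal_singleton_iff_inner_right, inner_sub_right,
      real_inner_smul_right ν ν c, hνν, mul_one, hcdef, real_inner_comm, sub_self]
  set w' : H := ⟨u - c • ν, hwmem⟩ with hw'def
  have hνw : ∀ w : H, ⟪ν, (w : EuclideanSpace ℝ (Fin (m + 1)))⟫ = 0 := fun w =>
    Submodule.mem_orthogonal_singleton_iff_inner_right.mp w.2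
  set g : H →L[ℝ] ℝ := (innerSL ℝ u).comp H.subtypeL with hgdef
  set M : H →L[ℝ] H := (r⁻¹ * r⁻¹) • (ContinuousLinearMap.id ℝ H - g.smulRight w') with hMdef
  have hM : (ContinuousLinearMap.adjoint L).comp L = M := by
    refine ContinuousLinearMap.ext fun v => ext_inner_right ℝ fun w => ?_
    rw [ContinuousLinearMap.comp_apply, ContinuousLinearMap.adjoint_inner_left]
    have hLv : ∀ z : H, L z = D' (z : EuclideanSpace ℝ (Fin (m + 1))) := by
      intro z
      show (fderiv ℝ (fun z : EuclideanSpace ℝ (Fin (m + 1)) => ‖z - x‖⁻¹ • (z - x)) y).comp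
        H.subtypeL z = _
      rw [hD]
      rfl
    rw [hLv, hLv, hinner]
    rw [Submodule.coe_inner]
    have hMv : ((M v : H) : EuclideanSpace ℝ (Fin (m + 1)))
        = (r⁻¹ * r⁻¹) • ((v : EuclideanSpace ℝ (Fin (m + 1)))
            - ⟪u, (v : EuclideanSpace ℝ (Fin (m + 1)))⟫ • (w' : EuclideanSpace ℝ (Fin (m + 1)))) := by
      simp [hMdef, hgdef]
    rw [hMv]
    have hw'w : ⟪(w' : EuclideanSpace ℝ (Fin (m + 1))), (w : EuclideanSpace ℝ (Fin (m + 1)))⟫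
        = ⟪u, (w : EuclideanSpace ℝ (Fin (m + 1)))⟫ := by
      rw [hw'def]
      rw [inner_sub_left, real_inner_smul_left ν (w : EuclideanSpace ℝ (Fin (m + 1))) c,
        hνw w, mul_zero, sub_zero]
    rw [real_inner_smul_left ((v : EuclideanSpace ℝ (Fin (m + 1)))
          - ⟪u, (v : EuclideanSpace ℝ (Fin (m + 1)))⟫ • (w' : EuclideanSpace ℝ (Fin (m + 1))))
        (w : EuclideanSpace ℝ (Fin (m + 1))) (r⁻¹ * r⁻¹), inner_sub_left,
      real_inner_smul_left (w' : EuclideanSpace ℝ (Fin (m + 1)))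
        (w : EuclideanSpace ℝ (Fin (m + 1))) ⟪u, (v : EuclideanSpace ℝ (Fin (m + 1)))⟫, hw'w]
  have hd : Module.finrank ℝ H = m := by
    haveI : Fact (Module.finrank ℝ (EuclideanSpace ℝ (Fin (m + 1))) = m + 1) :=
      ⟨finrank_euclideanSpace_fin⟩
    have hν0 : ν ≠ 0 := by intro h; simp [h] at hν
    exact Submodule.finrank_orthogonal_span_singleton hν0
  have hgw : ⟪u, ((w' : EuclideanSpace ℝ (Fin (m + 1))))⟫ = 1 - c * c := by
    rw [hw'def]
    rw [inner_sub_right, real_inner_smul_right u ν c, hu2, hcdef]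
  have hdet : LinearMap.det M.toLinearMap = (r⁻¹ * r⁻¹) ^ m * (c * c) := by
    have hcoe : M.toLinearMap
        = (r⁻¹ * r⁻¹) • (LinearMap.id - LinearMap.smulRight (g : H →ₗ[ℝ] ℝ) w') := rfl
    rw [hcoe, LinearMap.det_smul, det_id_sub_smulRight, hd]
    have : (g : H →ₗ[ℝ] ℝ) w' = 1 - c * c := by
      simpa [hgdef] using hgw
    rw [this]
    ring
  rw [hM, hdet]
  have habs : |c| = |⟪x - y, ν⟫| * r⁻¹ := by
    have hxyu : (x - y : EuclideanSpace ℝ (Fin (m + 1))) = (-r) • u := by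
      rw [hudef, smul_smul, neg_mul, mul_inv_cancel₀ hr.ne', neg_smul, one_smul, neg_sub]
    rw [hcdef, real_inner_comm, hxyu, real_inner_smul_left, abs_mul, abs_neg, abs_of_pos hr,
      mul_comm, ← mul_assoc, inv_mul_cancel₀ hr.ne', one_mul, real_inner_comm]
  have hxynorm : ‖x - y‖ = r := by rw [hrdef, norm_sub_rev]
  have hsq : (r⁻¹ * r⁻¹) ^ m * (c * c) = (r⁻¹ ^ m * |c|) ^ 2 := by
    rw [mul_pow, mul_pow, sq_abs]; ring
  rw [hsq, Real.sqrt_sq (by positivity), habs, hxynorm, pow_succ]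
  field_simp
  rw [one_div, inv_pow, mul_comm, ← mul_assoc, mul_inv_cancel₀ (pow_ne_zero _ hr.ne'), one_mul]
end

section
/- Let A : R^n → R^n be the linear map A(u) = (u − ⟨w, u⟩w)/λ restricted to an (n−1)-dimensional subspace H, where w is a unit vector not orthogonal to H and λ > 0. Then the singular values of A|_H consist of 1/λ with multiplicity n−2 and |⟨w, ν⟩|/λ with multiplicity 1, where ν is a unit normal to H. In particular, the Jacobian determinant of A|_H equals |⟨w, ν⟩|/λ^{n−1}. -/
open Metric Set ContinuousLinearMap
open scoped RealInnerProductSpace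

set_option maxHeartbeats 1000000 in
/-- Let `A u = (u - ⟪w, u⟫ • w)/λ` with `w` a unit vector and `λ > 0`, and
let `H = (span ν)ᗮ` be a hyperplane through the origin with unit normal `ν`, with `w` not
orthogonal to `H`.  Then the singular values of `A|_H` (the eigenvalues of
`(A|_H)* ∘ (A|_H)` are their squares) consist of `1/λ` with multiplicity `n - 2` and
`|⟪w, ν⟫|/λ` with multiplicity `1`; in particular the Jacobian determinant
`√(det (L* ∘ L))` of `L = A|_H` equals `|⟪w, ν⟫| / λ ^ (n - 1)`. -/
theorem stmt_3 (n : ℕ) (hn : 2 ≤ n) (w ν : EuclideanSpace ℝ (Fin n))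
    (hw : ‖w‖ = 1) (hν : ‖ν‖ = 1) (lam : ℝ) (hlam : 0 < lam)
    (A : EuclideanSpace ℝ (Fin n) →L[ℝ] EuclideanSpace ℝ (Fin n))
    (hA : ∀ u, A u = lam⁻¹ • (u - ⟪w, u⟫ • w))
    (hworth : w ∉ ((ℝ ∙ ν)ᗮ)ᗮ) :
    let H : Submodule ℝ (EuclideanSpace ℝ (Fin n)) := (ℝ ∙ ν)ᗮ
    let L : H →L[ℝ] EuclideanSpace ℝ (Fin n) := A.comp H.subtypeL
    (∃ (b : OrthonormalBasis (Fin (n - 1)) ℝ H) (σ : Fin (n - 1) → ℝ),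
        (∀ i, (ContinuousLinearMap.adjoint L).comp L (b i) = (σ i ^ 2) • (b i)) ∧
        Multiset.map σ Finset.univ.val =
          Multiset.replicate (n - 2) (1 / lam) + {|⟪w, ν⟫| / lam}) ∧
      Real.sqrt (LinearMap.det (((ContinuousLinearMap.adjoint L).comp L).toLinearMap)) =
        |⟪w, ν⟫| / lam ^ (n - 1) := by
  intro H L
  set c : ℝ := ⟪w, ν⟫ with hc
  set w' : EuclideanSpace ℝ (Fin n) := w - c • ν with hw'
  have h2 : ⟪ν, w⟫ = c := by rw [hc]; exact real_inner_comm w ν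
  have hνw' : ⟪ν, w'⟫ = 0 := by
    rw [hw', inner_sub_right, real_inner_smul_right, real_inner_self_eq_norm_sq, hν, h2]
    ring
  have hw'H : w' ∈ H := Submodule.mem_orthogonal_singleton_iff_inner_right.mpr hνw'
  have hw'0 : w' ≠ 0 := by
    intro h
    apply hworth
    have hwc : w = c • ν := by rw [← sub_eq_zero]; exact h
    have : w ∈ (ℝ ∙ ν) := hwc ▸ Submodule.smul_mem _ c (Submodule.mem_span_singleton_self ν)
    exact Submodule.le_orthogonal_orthogonal _ this
  -- norm relation : ‖w'‖^2 = 1 - c^2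
  have hwdecomp : w = w' + c • ν := by rw [hw']; abel
  have hnorm : ‖w'‖ ^ 2 = 1 - c ^ 2 := by
    have h1 : ‖w‖ ^ 2 = ‖w'‖ ^ 2 + ‖c • ν‖ ^ 2 := by
      have hinner : ⟪w', c • ν⟫ = 0 := by
        rw [real_inner_smul_right, real_inner_comm ν w', hνw']; ring
      rw [hwdecomp, norm_add_sq_real, hinner]; ring
    rw [hw, norm_smul, hν] at h1
    simp at h1
    nlinarith [h1]
  -- inner w x = inner w' x for x ∈ H
  have hwx : ∀ x ∈ H, ⟪w, x⟫ = ⟪w', x⟫ := by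
    intro x hx
    have hνx : ⟪ν, x⟫ = 0 := Submodule.mem_orthogonal_singleton_iff_inner_right.mp hx
    rw [hwdecomp, inner_add_left, real_inner_smul_left, hνx]; ring
  -- dimension of H
  have hν0 : ν ≠ 0 := by intro h; rw [h, norm_zero] at hν; norm_num at hν
  haveI : Fact (Module.finrank ℝ (EuclideanSpace ℝ (Fin n)) = (n - 1) + 1) :=
    ⟨by rw [finrank_euclideanSpace_fin]; omega⟩
  have hfrH : Module.finrank ℝ H = n - 1 := Submodule.finrank_orthogonal_span_singleton hν0
  -- the distinguished unit vector of H
  have hw'n : ‖w'‖ ≠ 0 := norm_ne_zero_iff.mpr hw'0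
  set e : H := ⟨‖w'‖⁻¹ • w', H.smul_mem _ hw'H⟩ with he_def
  have he : ‖e‖ = 1 := by
    show ‖‖w'‖⁻¹ • w'‖ = 1
    exact norm_smul_inv_norm hw'0
  have hecoe : (e : EuclideanSpace ℝ (Fin n)) = ‖w'‖⁻¹ • w' := rfl
  have hw'e : w' = ‖w'‖ • (e : EuclideanSpace ℝ (Fin n)) := by
    rw [hecoe, smul_smul, mul_inv_cancel₀ hw'n, one_smul]
  set j₀ : Fin (n - 1) := ⟨0, by omega⟩ with hj₀
  have hon : Orthonormal ℝ (({j₀} : Set (Fin (n - 1))).restrict (fun _ => e)) := by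
    refine ⟨fun i => he, fun i j hij => absurd (Subtype.ext (i.2.trans j.2.symm)) hij⟩
  obtain ⟨b, hb⟩ := hon.exists_orthonormalBasis_extension_of_card_eq
    (by simpa using hfrH)
  have hbj₀ : b j₀ = e := hb j₀ rfl
  set σ : Fin (n - 1) → ℝ := fun i => if i = j₀ then |c| / lam else 1 / lam with hσ
  -- inner products of images under L
  have hLapp : ∀ x : H, L x = lam⁻¹ • ((x : EuclideanSpace ℝ (Fin n)) -
      ⟪w, (x : EuclideanSpace ℝ (Fin n))⟫ • w) := fun x => hA x
  have hLL : ∀ x y : H, ⟪L x, L y⟫ =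
      lam⁻¹ ^ 2 * (⟪(x : EuclideanSpace ℝ (Fin n)), (y : EuclideanSpace ℝ (Fin n))⟫ -
        ⟪w, (x : EuclideanSpace ℝ (Fin n))⟫ * ⟪w, (y : EuclideanSpace ℝ (Fin n))⟫) := by
    intro x y
    rw [hLapp, hLapp]
    simp only [inner_sub_left, inner_sub_right, real_inner_smul_left, real_inner_smul_right,
      real_inner_self_eq_norm_sq, hw]
    rw [real_inner_comm (x : EuclideanSpace ℝ (Fin n)) w]
    ring
  have hwbi : ∀ i, i ≠ j₀ → ⟪w, ((b i : EuclideanSpace ℝ (Fin n)))⟫ = 0 := by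
    intro i hi
    have h0 : ⟪(e : EuclideanSpace ℝ (Fin n)), (b i : EuclideanSpace ℝ (Fin n))⟫ = 0 := by
      rw [← hbj₀, ← Submodule.coe_inner]
      exact b.orthonormal.2 (Ne.symm hi)
    rw [hwx _ (b i).2, hw'e, real_inner_smul_left, h0]; ring
  have hwe : ⟪w, (e : EuclideanSpace ℝ (Fin n))⟫ = ‖w'‖ := by
    rw [hwx _ e.2, hecoe, real_inner_smul_right, real_inner_self_eq_norm_sq]
    field_simp
  have heig : ∀ i, (ContinuousLinearMap.adjoint L).comp L (b i) = (σ i ^ 2) • (b i) := by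
    intro i
    apply ext_inner_right ℝ
    intro y
    rw [ContinuousLinearMap.comp_apply, ContinuousLinearMap.adjoint_inner_left,
      real_inner_smul_left, hLL, Submodule.coe_inner]
    by_cases hi : i = j₀
    · subst hi
      rw [hbj₀, hwe]
      have hy : ⟪w, (y : EuclideanSpace ℝ (Fin n))⟫ =
          ‖w'‖ * ⟪(e : EuclideanSpace ℝ (Fin n)), (y : EuclideanSpace ℝ (Fin n))⟫ := by
        rw [hwx _ y.2]
        conv_lhs => rw [hw'e]
        rw [real_inner_smul_left]
      have hσ0 : σ j₀ = |c| / lam := if_pos rfl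
      rw [hy, hσ0, div_pow, sq_abs]
      linear_combination
        (-(lam⁻¹ ^ 2 * ⟪(e : EuclideanSpace ℝ (Fin n)), (y : EuclideanSpace ℝ (Fin n))⟫)) * hnorm
    · have hσ1 : σ i = 1 / lam := if_neg hi
      rw [hwbi i hi, hσ1]
      ring
  have hmem : j₀ ∈ Finset.univ.val := Finset.mem_val.mpr (Finset.mem_univ j₀)
  have hσ0 : σ j₀ = |c| / lam := if_pos rfl
  have hcard : (Finset.univ.val.erase j₀).card = n - 2 := by
    rw [Multiset.card_erase_of_mem hmem]
    simp
    omega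
  have hrep : Multiset.map σ (Finset.univ.val.erase j₀) =
      Multiset.replicate (n - 2) (1 / lam) := by
    rw [Multiset.eq_replicate]
    refine ⟨by rw [Multiset.card_map, hcard], ?_⟩
    intro x hx
    obtain ⟨i, hi, rfl⟩ := Multiset.mem_map.mp hx
    have hij : i ≠ j₀ := ((Finset.univ.nodup).mem_erase_iff.mp hi).1
    exact if_neg hij
  have hms : Multiset.map σ Finset.univ.val =
      Multiset.replicate (n - 2) (1 / lam) + {|c| / lam} := by
    rw [add_comm, Multiset.singleton_add, ← hrep, ← hσ0, ← Multiset.map_cons,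
      Multiset.cons_erase hmem]
  refine ⟨⟨b, σ, heig, hms⟩, ?_⟩
  -- determinant computation
  have hdet : LinearMap.det (((ContinuousLinearMap.adjoint L).comp L).toLinearMap) =
      ∏ i, σ i ^ 2 := by
    rw [← LinearMap.det_toMatrix b.toBasis]
    have hmat : LinearMap.toMatrix b.toBasis b.toBasis
        (((ContinuousLinearMap.adjoint L).comp L).toLinearMap) =
        Matrix.diagonal (fun i => σ i ^ 2) := by
      ext i j
      rw [LinearMap.toMatrix_apply, OrthonormalBasis.coe_toBasis,
        ContinuousLinearMap.coe_coe, heig j, map_smul, ← OrthonormalBasis.coe_toBasis b,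
        Module.Basis.repr_self]
      by_cases hij : i = j
      · subst hij; simp [Matrix.diagonal]
      · simp [Matrix.diagonal, hij, Finsupp.single_apply, Ne.symm hij]
    rw [hmat, Matrix.det_diagonal]
  have hnonneg : (0 : ℝ) ≤ ∏ i, σ i := by
    refine Finset.prod_nonneg fun i _ => ?_
    by_cases h : i = j₀ <;> simp only [hσ, h, if_pos, if_neg, if_true, if_false] <;>
      positivity
  have hprod : ∏ i, σ i = (1 / lam) ^ (n - 2) * (|c| / lam) := by
    have h1 : ∏ i, σ i = (Multiset.map σ Finset.univ.val).prod := rfl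
    rw [h1, hms, Multiset.prod_add, Multiset.prod_replicate, Multiset.prod_singleton]
  rw [hdet, Finset.prod_pow, Real.sqrt_sq hnonneg, hprod, div_pow, one_pow,
    div_mul_div_comm, one_mul, ← pow_succ]
  congr 2
  omega
end

section
/- Let E ⊂ R^n be a bounded open set with C^1 boundary, x ∈ ∂E, and ω ∈ S^{n-1} a direction such that the line L_{x,ω} = x + Rω intersects ∂E transversally (i.e., ⟨ω, ν(y)⟩ ≠ 0 for every y ∈ ∂E ∩ L_{x,ω}) in finitely many points. Then the number of intersection points is even, and enumerating them as y_1, ..., y_k along the line, the signs of ⟨ω, ν(y_i)⟩ alternate, with ⟨ω, ν(y_1)⟩ < 0; consequently Σ_i sgn⟨ω, ν(y_i)⟩ = 0. -/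
open Metric Set
open scoped RealInnerProductSpace

open Filter
open scoped Topology

theorem sgn_right' {g : ℝ → ℝ} {s d : ℝ} (h : HasDerivAt g d s) (hg : g s = 0) (hd : d ≠ 0) :
    ∀ᶠ u in 𝓝[>] s, (0 < g u ↔ 0 < d) := by
  have hs := hasDerivAt_iff_tendsto_slope.1 h
  have hs' : Tendsto (slope g s) (𝓝[>] s) (𝓝 d) :=
    hs.mono_left (nhdsWithin_mono _ (fun u hu => ne_of_gt hu))
  rcases hd.lt_or_gt with hneg | hpos
  · have h1 : ∀ᶠ u in 𝓝[>] s, slope g s u < 0 :=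
      hs'.eventually (eventually_lt_nhds hneg)
    filter_upwards [h1, self_mem_nhdsWithin] with u hu hu'
    have : g u < 0 := by
      have := mul_neg_of_neg_of_pos hu (sub_pos.2 (mem_Ioi.1 hu'))
      rw [slope_def_field] at this
      have hne : u - s ≠ 0 := sub_ne_zero.2 (ne_of_gt (mem_Ioi.1 hu'))
      have h3 : g u - g s < 0 := by
        rw [div_mul_cancel₀ _ hne] at this; exact this
      simpa [hg] using h3
    constructor
    · intro h'; exact absurd h' (not_lt.2 this.le)
    · intro h'; exact absurd h' (not_lt.2 hneg.le)
  · have h1 : ∀ᶠ u in 𝓝[>] s, 0 < slope g s u :=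
      hs'.eventually (eventually_gt_nhds hpos)
    filter_upwards [h1, self_mem_nhdsWithin] with u hu hu'
    have : 0 < g u := by
      have := mul_pos hu (sub_pos.2 (mem_Ioi.1 hu'))
      rw [slope_def_field] at this
      have hne : u - s ≠ 0 := sub_ne_zero.2 (ne_of_gt (mem_Ioi.1 hu'))
      have h3 : 0 < g u - g s := by
        rw [div_mul_cancel₀ _ hne] at this; exact this
      simpa [hg] using h3
    simp [this, hpos]

theorem sgn_left' {g : ℝ → ℝ} {s d : ℝ} (h : HasDerivAt g d s) (hg : g s = 0) (hd : d ≠ 0) :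
    ∀ᶠ u in 𝓝[<] s, (0 < g u ↔ d < 0) := by
  have hs := hasDerivAt_iff_tendsto_slope.1 h
  have hs' : Tendsto (slope g s) (𝓝[<] s) (𝓝 d) :=
    hs.mono_left (nhdsWithin_mono _ (fun u hu => ne_of_lt hu))
  rcases hd.lt_or_gt with hneg | hpos
  · have h1 : ∀ᶠ u in 𝓝[<] s, slope g s u < 0 := hs'.eventually (eventually_lt_nhds hneg)
    filter_upwards [h1, self_mem_nhdsWithin] with u hu hu'
    have hne : u - s ≠ 0 := sub_ne_zero.2 (ne_of_lt (mem_Iio.1 hu'))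
    have : 0 < g u := by
      have h2 := mul_pos_of_neg_of_neg hu (sub_neg.2 (mem_Iio.1 hu'))
      rw [slope_def_field, div_mul_cancel₀ _ hne] at h2
      simpa [hg] using h2
    simp [this, hneg]
  · have h1 : ∀ᶠ u in 𝓝[<] s, 0 < slope g s u := hs'.eventually (eventually_gt_nhds hpos)
    filter_upwards [h1, self_mem_nhdsWithin] with u hu hu'
    have hne : u - s ≠ 0 := sub_ne_zero.2 (ne_of_lt (mem_Iio.1 hu'))
    have : g u < 0 := by
      have h2 := mul_neg_of_pos_of_neg hu (sub_neg.2 (mem_Iio.1 hu'))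
      rw [slope_def_field, div_mul_cancel₀ _ hne] at h2
      simpa [hg] using h2
    constructor
    · intro h'; exact absurd h' (not_lt.2 this.le)
    · intro h'; exact absurd h' (not_lt.2 hpos.le)

theorem sign_const' {g : ℝ → ℝ} (hc : Continuous g) {a b : ℝ} (hab : a ≤ b)
    (hnz : ∀ s ∈ Set.Icc a b, g s ≠ 0) : (0 < g a ↔ 0 < g b) := by
  have ha := hnz a ⟨le_refl a, hab⟩
  have hb := hnz b ⟨hab, le_refl b⟩
  constructor
  · intro hga
    by_contra hgb
    have hgb' : g b < 0 := (hb.lt_or_gt).resolve_right hgb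
    have : (0:ℝ) ∈ Set.Ioo (g b) (g a) := ⟨hgb', hga⟩
    obtain ⟨c, hc1, hc2⟩ := intermediate_value_Ioo' hab hc.continuousOn this
    exact hnz c (Set.Ioo_subset_Icc_self hc1) hc2
  · intro hgb
    by_contra hga
    have hga' : g a < 0 := (ha.lt_or_gt).resolve_right hga
    have : (0:ℝ) ∈ Set.Ioo (g a) (g b) := ⟨hga', hgb⟩
    obtain ⟨c, hc1, hc2⟩ := intermediate_value_Ioo hab hc.continuousOn this
    exact hnz c (Set.Ioo_subset_Icc_self hc1) hc2

theorem sign_mul_pos {c a : ℝ} (hc : 0 < c) :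
    Real.sign (c * a) = Real.sign a ∧ (c * a < 0 ↔ a < 0) ∧ (0 < c * a ↔ 0 < a) := by
  rcases lt_trichotomy a 0 with h | h | h
  · have : c * a < 0 := mul_neg_of_pos_of_neg hc h
    refine ⟨by rw [Real.sign_of_neg h, Real.sign_of_neg this], ⟨fun _ => h, fun _ => this⟩, ?_⟩
    constructor <;> intro h' <;> [exact absurd h' (not_lt.2 this.le); exact absurd h' (not_lt.2 h.le)]
  · simp [h]
  · have : 0 < c * a := mul_pos hc h
    constructor
    · rw [Real.sign_of_pos h, Real.sign_of_pos this]
    constructor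
    · constructor <;> intro h' <;> [exact absurd h' (not_lt.2 this.le); exact absurd h' (not_lt.2 h.le)]
    · simp [this, h]

/-- The outward unit normal field of the level-set description `{f = 0}` of a `C¹`
boundary: the normalized gradient of the defining function `f`. -/
noncomputable def normalField {n : ℕ} (f : EuclideanSpace ℝ (Fin n) → ℝ)
    (z : EuclideanSpace ℝ (Fin n)) : EuclideanSpace ℝ (Fin n) :=
  ‖gradient f z‖⁻¹ • gradient f z

/-- Let `E ⊂ ℝⁿ` be a bounded open set with `C¹` boundary (described by a
`C¹` defining function `f` with nonvanishing gradient on `∂E = {f = 0}`, `E = {f < 0}`),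
with outward unit normal `ν = ∇f/‖∇f‖`.  Let `x ∈ ∂E` and `ω ∈ S^{n-1}` be such that the
line `L_{x,ω}` meets `∂E` transversally in finitely many points `y_1, ..., y_k`,
enumerated along the line as `y_i = x + t_i ω` with `t` strictly increasing.  Then `k` is
even, `⟪ω, ν y_1⟫ < 0`, the signs of `⟪ω, ν y_i⟫` alternate, and
`Σ_i sgn ⟪ω, ν y_i⟫ = 0`. -/
theorem stmt_12 (n : ℕ) (E : Set (EuclideanSpace ℝ (Fin n)))
    (hopen : IsOpen E) (hbdd : Bornology.IsBounded E)
    (f : EuclideanSpace ℝ (Fin n) → ℝ) (hf : ContDiff ℝ 1 f)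
    (hEf : E = {z | f z < 0}) (hfr : frontier E = {z | f z = 0})
    (hgrad : ∀ z ∈ frontier E, gradient f z ≠ 0)
    (x : EuclideanSpace ℝ (Fin n)) (hx : x ∈ frontier E)
    (ω : EuclideanSpace ℝ (Fin n)) (hω : ‖ω‖ = 1)
    (k : ℕ) (t : Fin k → ℝ) (ht : StrictMono t)
    (hinter : {y | y ∈ frontier E ∧ ∃ s : ℝ, y = x + s • ω} =
        Set.range fun i => x + t i • ω)
    (htrans : ∀ y ∈ frontier E, (∃ s : ℝ, y = x + s • ω) →
        ⟪ω, normalField f y⟫ ≠ 0) :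
    Even k ∧
      (∀ h : 0 < k, ⟪ω, normalField f (x + t ⟨0, h⟩ • ω)⟫ < 0) ∧
      (∀ (i : ℕ) (h : i + 1 < k),
        (⟪ω, normalField f (x + t ⟨i, Nat.lt_of_succ_lt h⟩ • ω)⟫ < 0 ↔
          0 < ⟪ω, normalField f (x + t ⟨i + 1, h⟩ • ω)⟫)) ∧
      ∑ i, Real.sign ⟪ω, normalField f (x + t i • ω)⟫ = 0 := by
  have hω0 : ω ≠ 0 := fun h => by simp [h] at hω
  set g : ℝ → ℝ := fun s => f (x + s • ω) with hgdef
  -- derivative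
  have hg' : ∀ s : ℝ, HasDerivAt g ⟪ω, gradient f (x + s • ω)⟫ s := by
    intro s
    have hdf : DifferentiableAt ℝ f (x + s • ω) := (hf.differentiable one_ne_zero).differentiableAt
    have hline : HasDerivAt (fun s : ℝ => x + s • ω) ω s := by
      simpa using ((hasDerivAt_id s).smul_const ω).const_add x
    have h2 := hdf.hasGradientAt.hasFDerivAt.comp_hasDerivAt s hline
    rw [real_inner_comm]
    exact h2.congr_deriv (by simp [InnerProductSpace.toDual_apply_apply])
  have hgc : Continuous g :=
    hf.continuous.comp (by continuity)
  -- zeros of g are exactly the t i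
  have hzero : ∀ s : ℝ, g s = 0 ↔ ∃ i, t i = s := by
    intro s
    constructor
    · intro hs
      have hmem : (x + s • ω) ∈ {y | y ∈ frontier E ∧ ∃ s' : ℝ, y = x + s' • ω} :=
        ⟨by rw [hfr]; exact hs, s, rfl⟩
      rw [hinter] at hmem
      obtain ⟨i, hi⟩ := hmem
      refine ⟨i, smul_left_injective ℝ hω0 ?_⟩
      have := hi
      simp only at this
      exact add_left_cancel this
    · rintro ⟨i, rfl⟩
      have hmem : (x + t i • ω) ∈ Set.range fun i => x + t i • ω := ⟨i, rfl⟩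
      rw [← hinter] at hmem
      have := hmem.1
      rw [hfr] at this
      exact this
  have hzt : ∀ i : Fin k, g (t i) = 0 := fun i => (hzero (t i)).2 ⟨i, rfl⟩
  have hfront : ∀ i : Fin k, x + t i • ω ∈ frontier E := by
    intro i; rw [hfr]; exact hzt i
  -- relation between inner with normal field and inner with gradient
  set d : Fin k → ℝ := fun i => ⟪ω, gradient f (x + t i • ω)⟫ with hddef
  have hrel : ∀ i : Fin k,
      Real.sign ⟪ω, normalField f (x + t i • ω)⟫ = Real.sign (d i) ∧
      (⟪ω, normalField f (x + t i • ω)⟫ < 0 ↔ d i < 0) ∧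
      (0 < ⟪ω, normalField f (x + t i • ω)⟫ ↔ 0 < d i) := by
    intro i
    have hgne := hgrad _ (hfront i)
    have hpos : (0:ℝ) < ‖gradient f (x + t i • ω)‖⁻¹ :=
      inv_pos.2 (norm_pos_iff.2 hgne)
    have heq : ⟪ω, normalField f (x + t i • ω)⟫
        = ‖gradient f (x + t i • ω)‖⁻¹ * d i := by
      rw [hddef]; simp only [normalField, real_inner_smul_right]
    obtain ⟨h1, h2, h3⟩ := sign_mul_pos (a := d i) hpos
    exact ⟨by rw [heq, h1], by rw [heq]; exact h2, by rw [heq]; exact h3⟩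
  have hdne : ∀ i : Fin k, d i ≠ 0 := by
    intro i hdi
    have := htrans _ (hfront i) ⟨t i, rfl⟩
    have hsg := (hrel i).2.1
    have hsg2 := (hrel i).2.2
    rcases this.lt_or_gt with h | h
    · exact absurd (hsg.1 h) (by simp [hdi])
    · exact absurd (hsg2.1 h) (by simp [hdi])
  -- boundedness: g is positive far away
  obtain ⟨r, hr⟩ := (hbdd.closure).subset_closedBall x
  have hout : ∀ s : ℝ, r < |s| → 0 < g s := by
    intro s hs
    have hnot : x + s • ω ∉ closure E := by
      intro hmem
      have h1 := hr hmem
      rw [mem_closedBall, dist_eq_norm] at h1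
      have : ‖x + s • ω - x‖ = |s| := by
        simp [norm_smul, hω]
      rw [this] at h1
      exact absurd h1 (not_le.2 hs)
    rcases lt_trichotomy (g s) 0 with h | h | h
    · exact absurd (subset_closure (show (x + s • ω) ∈ E by rw [hEf]; exact h)) hnot
    · exact absurd (frontier_subset_closure (show (x + s • ω) ∈ frontier E by rw [hfr]; exact h)) hnot
    · exact h
  -- no zeros strictly between consecutive t's, before the first, after the last
  -- the first sign is negative
  have hfirst : ∀ h : 0 < k, d ⟨0, h⟩ < 0 := by
    intro hk
    set i0 : Fin k := ⟨0, hk⟩ with hi0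
    have hnzlt : ∀ s : ℝ, s < t i0 → g s ≠ 0 := by
      intro s hs hgs
      obtain ⟨j, hj⟩ := (hzero s).1 hgs
      have : t i0 ≤ t j := ht.monotone (by simp [Fin.le_def, hi0])
      rw [hj] at this
      exact absurd hs (not_lt.2 this)
    have hev := sgn_left' (hg' (t i0)) (hzt i0) (hdne i0)
    set a : ℝ := min (t i0 - 1) (-(|r| + 1)) with hadef
    have ha_lt : a < t i0 := lt_of_le_of_lt (min_le_left _ _) (by linarith)
    have haout : r < |a| := by
      have h1 : a ≤ -(|r| + 1) := min_le_right _ _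
      have h2 : |r| + 1 ≤ |a| :=
        le_trans (by linarith) (neg_le_abs a)
      calc r ≤ |r| := le_abs_self r
        _ < |r| + 1 := by linarith
        _ ≤ |a| := h2
    have hIoo : Set.Ioo a (t i0) ∈ 𝓝[<] (t i0) := Ioo_mem_nhdsLT_of_mem ⟨ha_lt, le_refl _⟩
    obtain ⟨u, huiff, huI⟩ := (hev.and (eventually_of_mem hIoo (fun u hu => hu))).exists
    have hga : 0 < g a := hout a haout
    have hsc : (0 < g a ↔ 0 < g u) := by
      refine sign_const' hgc (le_of_lt huI.1) ?_
      intro s hs hgs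
      exact hnzlt s (lt_of_le_of_lt hs.2 huI.2) hgs
    exact huiff.1 (hsc.1 hga)
  -- the last sign is positive
  have hlast : ∀ h : 0 < k, 0 < d ⟨k - 1, Nat.sub_lt h Nat.one_pos⟩ := by
    intro hk
    set iL : Fin k := ⟨k - 1, Nat.sub_lt hk Nat.one_pos⟩ with hiL
    have hnzgt : ∀ s : ℝ, t iL < s → g s ≠ 0 := by
      intro s hs hgs
      obtain ⟨j, hj⟩ := (hzero s).1 hgs
      have : t j ≤ t iL := ht.monotone (by simp [Fin.le_def, hiL]; omega)
      rw [hj] at this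
      exact absurd hs (not_lt.2 this)
    have hev := sgn_right' (hg' (t iL)) (hzt iL) (hdne iL)
    set b : ℝ := max (t iL + 1) (|r| + 1) with hbdef
    have hb_gt : t iL < b := lt_of_lt_of_le (by linarith) (le_max_left _ _)
    have hbout : r < |b| := by
      have h1 : |r| + 1 ≤ b := le_max_right _ _
      calc r ≤ |r| := le_abs_self r
        _ < |r| + 1 := by linarith
        _ ≤ |b| := le_trans h1 (le_abs_self b)
    have hIoo : Set.Ioo (t iL) b ∈ 𝓝[>] (t iL) := Ioo_mem_nhdsGT_of_mem ⟨le_refl _, hb_gt⟩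
    obtain ⟨u, huiff, huI⟩ := (hev.and (eventually_of_mem hIoo (fun u hu => hu))).exists
    have hgb : 0 < g b := hout b hbout
    have hsc : (0 < g u ↔ 0 < g b) := by
      refine sign_const' hgc (le_of_lt huI.2) ?_
      intro s hs hgs
      exact hnzgt s (lt_of_lt_of_le huI.1 hs.1) hgs
    exact huiff.1 (hsc.2 hgb)
  -- alternation
  have halt : ∀ (i : ℕ) (h : i + 1 < k),
      (d ⟨i, Nat.lt_of_succ_lt h⟩ < 0 ↔ 0 < d ⟨i + 1, h⟩) := by
    intro i h
    set i1 : Fin k := ⟨i, Nat.lt_of_succ_lt h⟩ with hi1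
    set i2 : Fin k := ⟨i + 1, h⟩ with hi2
    have hlt : t i1 < t i2 := ht (by simp [Fin.lt_def, hi1, hi2])
    have hnzmid : ∀ s : ℝ, s ∈ Set.Ioo (t i1) (t i2) → g s ≠ 0 := by
      rintro s ⟨hs1, hs2⟩ hgs
      obtain ⟨j, hj⟩ := (hzero s).1 hgs
      rw [← hj] at hs1 hs2
      have hj1 : i1 < j := ht.lt_iff_lt.1 hs1
      have hj2 : j < i2 := ht.lt_iff_lt.1 hs2
      rw [Fin.lt_def] at hj1 hj2
      simp [hi1, hi2] at hj1 hj2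
      omega
    have hev1 := sgn_right' (hg' (t i1)) (hzt i1) (hdne i1)
    have hev2 := sgn_left' (hg' (t i2)) (hzt i2) (hdne i2)
    have hI1 : Set.Ioo (t i1) (t i2) ∈ 𝓝[>] (t i1) := Ioo_mem_nhdsGT_of_mem ⟨le_refl _, hlt⟩
    have hI2 : Set.Ioo (t i1) (t i2) ∈ 𝓝[<] (t i2) := Ioo_mem_nhdsLT_of_mem ⟨hlt, le_refl _⟩
    obtain ⟨u, hu⟩ := (hev1.and (eventually_of_mem hI1 (fun u hu => hu))).exists
    obtain ⟨v, hv⟩ := (hev2.and (eventually_of_mem hI2 (fun u hu => hu))).exists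
    have hsc : (0 < g u ↔ 0 < g v) := by
      rcases le_total u v with huv | huv
      · refine sign_const' hgc huv ?_
        intro s hs hgs
        exact hnzmid s ⟨lt_of_lt_of_le hu.2.1 hs.1, lt_of_le_of_lt hs.2 hv.2.2⟩ hgs
      · exact (sign_const' hgc huv (fun s hs hgs =>
          hnzmid s ⟨lt_of_lt_of_le hv.2.1 hs.1, lt_of_le_of_lt hs.2 hu.2.2⟩ hgs)).symm
    have hkey : (0 < d i1 ↔ d i2 < 0) := by
      rw [← hu.1, hsc, hv.1]
    rcases (hdne i1).lt_or_gt with h1 | h1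
    · simp only [h1, iff_true_intro h1, true_iff]
      rcases (hdne i2).lt_or_gt with h2 | h2
      · exact absurd (hkey.2 h2) (not_lt.2 h1.le)
      · simpa [h1] using h2
    · have h2 : d i2 < 0 := hkey.1 h1
      constructor
      · intro h'; exact absurd h' (not_lt.2 h1.le)
      · intro h'; exact absurd h' (not_lt.2 h2.le)
  -- parity of signs
  have hpar : ∀ (i : ℕ) (hi : i < k), (d ⟨i, hi⟩ < 0 ↔ Even i) := by
    intro i
    induction i with
    | zero => intro hi; simpa using hfirst hi
    | succ m ih =>
      intro hi
      have hm := ih (Nat.lt_of_succ_lt hi)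
      have hal := halt m hi
      rw [Nat.even_add_one, ← hm]
      constructor
      · intro h1 h2
        exact absurd (hal.1 h2) (not_lt.2 h1.le)
      · intro h1
        rcases (hdne ⟨m + 1, hi⟩).lt_or_gt with h2 | h2
        · exact h2
        · exact absurd (hal.2 h2) h1
  -- k is even
  have heven : Even k := by
    rcases Nat.eq_zero_or_pos k with h0 | h0
    · simp [h0]
    · have hL := hlast h0
      have := hpar (k - 1) (Nat.sub_lt h0 Nat.one_pos)
      have hodd : ¬ Even (k - 1) := by
        rw [← this]; exact not_lt.2 hL.le
      obtain ⟨m, hm⟩ := Nat.odd_iff.2 (Nat.not_even_iff.1 hodd)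
      exact ⟨m + 1, by omega⟩
  refine ⟨heven, ?_, ?_, ?_⟩
  · intro h
    exact ((hrel ⟨0, h⟩).2.1).2 (hfirst h)
  · intro i h
    rw [(hrel ⟨i, Nat.lt_of_succ_lt h⟩).2.1, (hrel ⟨i + 1, h⟩).2.2]
    exact halt i h
  · have hterm : ∀ i : Fin k, Real.sign ⟪ω, normalField f (x + t i • ω)⟫
        = -(-1 : ℝ) ^ (i : ℕ) := by
      intro i
      rw [(hrel i).1]
      rcases (hdne i).lt_or_gt with h1 | h1
      · have he : Even (i : ℕ) := (hpar i i.2).1 h1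
        rw [Real.sign_of_neg h1, he.neg_one_pow]
      · have he : ¬ Even (i : ℕ) := fun he => absurd ((hpar i i.2).2 he) (not_lt.2 h1.le)
        rw [Real.sign_of_pos h1, (Nat.odd_iff.2 (Nat.not_even_iff.1 he)).neg_one_pow]
        ring
    rw [Finset.sum_congr rfl (fun i _ => hterm i)]
    rw [Fin.sum_univ_eq_sum_range (fun i => -(-1 : ℝ) ^ i)]
    rw [Finset.sum_neg_distrib, neg_one_geom_sum]
    simp [heven]
end
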